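/- For any molecular tree T with n ≥ 5 vertices and n ≡ 1 (mod 4), SO₂(T) ≤ (126n − 30)/170, with equality if and only if T has no vertex of degree 3, every vertex of degree 2 is adjacent to two vertices of degree 4, and no two vertices of degree 4 are adjacent (equivalently m₁₄ = (n+3)/2, m₂₄ = (n−5)/2 and all other m_{ij} vanish). -/
import Mathlib


open Finset

variable {V : Type*}

/-- The second Sombor index of a simple graph. -/
noncomputable def SO2 [Fintype V] [DecidableEq V] (G : SimpleGraph V) [DecidableRel G.Adj] : ℝ :=
  ∑ e ∈ G.edgeFinset,
    Sym2.lift ⟨fun u v =>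
        |((G.degree u : ℝ)^2 - (G.degree v : ℝ)^2)| / ((G.degree u : ℝ)^2 + (G.degree v : ℝ)^2),
      fun u v => by simp only []; rw [abs_sub_comm, add_comm]⟩ e

/-- `mij G i j` is the number of edges whose endpoint degrees are `i` and `j`. -/
def mij [Fintype V] [DecidableEq V] (G : SimpleGraph V) [DecidableRel G.Adj] (i j : ℕ) : ℕ :=
  (G.edgeFinset.filter (fun e => Sym2.map (fun v => G.degree v) e = s(i, j))).card

/-- `nd G i` is the number of vertices of degree `i`. -/
def nd [Fintype V] [DecidableEq V] (G : SimpleGraph V) [DecidableRel G.Adj] (i : ℕ) : ℕ :=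
  (Finset.univ.filter (fun v => G.degree v = i)).card

/-- The ten possible degree-types of an edge of a molecular graph. -/
def S10 : Finset (Sym2 ℕ) :=
  {s(1,1), s(1,2), s(1,3), s(1,4), s(2,2), s(2,3), s(2,4), s(3,3), s(3,4), s(4,4)}

/-- The SO₂ weight as a function of the degree-type. -/
noncomputable def wgt : Sym2 ℕ → ℝ :=
  Sym2.lift ⟨fun a b => |((a:ℝ)^2 - (b:ℝ)^2)| / ((a:ℝ)^2 + (b:ℝ)^2),
    fun a b => by simp only []; rw [abs_sub_comm, add_comm]⟩

/-- The number of occurrences of `i` in a degree-type. -/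
def cnt (i : ℕ) : Sym2 ℕ → ℕ :=
  Sym2.lift ⟨fun a b => (if a = i then 1 else 0) + (if b = i then 1 else 0),
    fun a b => add_comm _ _⟩

lemma sum_S10 {M : Type*} [AddCommMonoid M] (g : Sym2 ℕ → M) :
    ∑ t ∈ S10, g t = g s(1,1) + (g s(1,2) + (g s(1,3) + (g s(1,4) + (g s(2,2) +
      (g s(2,3) + (g s(2,4) + (g s(3,3) + (g s(3,4) + g s(4,4))))))))) := by
  rw [S10]
  repeat rw [Finset.sum_insert (by decide)]
  rw [Finset.sum_singleton]

lemma mapsS10 [Fintype V] [DecidableEq V] (T : SimpleGraph V) [DecidableRel T.Adj]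
    (hd1 : ∀ v : V, 1 ≤ T.degree v) (hdeg : ∀ v : V, T.degree v ≤ 4) :
    ∀ e ∈ T.edgeFinset, Sym2.map (fun v => T.degree v) e ∈ S10 := by
  intro e he
  induction e using Sym2.ind with
  | _ u v =>
    rw [Sym2.map_pair_eq]
    have h1 := hd1 u; have h2 := hdeg u; have h3 := hd1 v; have h4 := hdeg v
    interval_cases hu : T.degree u <;> interval_cases hv : T.degree v <;> decide

lemma sum_fiber [Fintype V] [DecidableEq V] (T : SimpleGraph V) [DecidableRel T.Adj]
    (hmaps : ∀ e ∈ T.edgeFinset, Sym2.map (fun v => T.degree v) e ∈ S10)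
    {M : Type*} [AddCommMonoid M] (f : Sym2 ℕ → M) :
    ∑ e ∈ T.edgeFinset, f (Sym2.map (fun v => T.degree v) e) =
      ∑ t ∈ S10,
        (T.edgeFinset.filter (fun e => Sym2.map (fun v => T.degree v) e = t)).card • f t := by
  rw [← Finset.sum_fiberwise_of_maps_to hmaps (fun e => f (Sym2.map (fun v => T.degree v) e))]
  refine Finset.sum_congr rfl fun t _ => ?_
  rw [Finset.sum_congr rfl (fun e he => by rw [(Finset.mem_filter.mp he).2]), Finset.sum_const]

lemma incid [Fintype V] [DecidableEq V] (T : SimpleGraph V) [DecidableRel T.Adj] (i : ℕ) :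
    ∑ e ∈ T.edgeFinset, cnt i (Sym2.map (fun v => T.degree v) e) = i * nd T i := by
  have key : ∀ e ∈ T.edgeFinset, cnt i (Sym2.map (fun v => T.degree v) e)
      = ((Finset.univ.filter (fun w => T.degree w = i)).filter (fun w => w ∈ e)).card := by
    intro e he
    induction e using Sym2.ind with
    | _ u v =>
      have hadj : T.Adj u v := T.mem_edgeSet.mp (SimpleGraph.mem_edgeFinset.mp he)
      have huv : u ≠ v := hadj.ne
      have hset :
          (Finset.univ.filter (fun w => T.degree w = i)).filter (fun w => w ∈ (s(u,v) : Sym2 V))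
            = ({u, v} : Finset V).filter (fun w => T.degree w = i) := by
        ext w
        simp only [Finset.mem_filter, Finset.mem_univ, true_and, Sym2.mem_iff,
          Finset.mem_insert, Finset.mem_singleton]
        tauto
      rw [hset, Sym2.map_pair_eq]
      by_cases h1 : T.degree u = i <;> by_cases h2 : T.degree v = i <;>
        simp [cnt, Finset.filter_insert, Finset.filter_singleton, h1, h2,
          Finset.card_insert_of_notMem, huv]
  rw [Finset.sum_congr rfl key]
  have swap : ∑ e ∈ T.edgeFinset,
      ((Finset.univ.filter (fun w => T.degree w = i)).filter (fun w => w ∈ e)).card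
      = ∑ w ∈ Finset.univ.filter (fun w => T.degree w = i),
          (T.edgeFinset.filter (fun e => w ∈ e)).card := by
    simp only [Finset.card_filter]
    exact Finset.sum_comm
  rw [swap]
  have hw : ∀ w ∈ Finset.univ.filter (fun w => T.degree w = i),
      (T.edgeFinset.filter (fun e => w ∈ e)).card = i := by
    intro w hw
    have hdw : T.degree w = i := (Finset.mem_filter.mp hw).2
    have : T.edgeFinset.filter (fun e => w ∈ e) = T.incidenceFinset w := by
      ext e
      simp [SimpleGraph.mem_incidenceFinset, SimpleGraph.incidenceSet,
        SimpleGraph.mem_edgeFinset, and_comm]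
    rw [this, SimpleGraph.card_incidenceFinset_eq_degree, hdw]
  rw [Finset.sum_congr rfl hw, Finset.sum_const, smul_eq_mul, mul_comm]
  rfl

set_option maxHeartbeats 4000000 in
theorem stmt10 [Fintype V] [DecidableEq V] (T : SimpleGraph V) [DecidableRel T.Adj]
    (hT : T.IsTree) (hdeg : ∀ v : V, T.degree v ≤ 4) (n : ℕ) (hn : n = Fintype.card V)
    (h5 : 5 ≤ n) (hmod : n % 4 = 1) :
    SO2 T ≤ (126 * (n : ℝ) - 30) / 170 ∧
      (SO2 T = (126 * (n : ℝ) - 30) / 170 ↔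
        (mij T 1 4 = (n + 3) / 2 ∧ mij T 2 4 = (n - 5) / 2 ∧ mij T 1 2 = 0 ∧ mij T 1 3 = 0 ∧ mij T 2 2 = 0 ∧ mij T 2 3 = 0 ∧ mij T 3 3 = 0 ∧ mij T 3 4 = 0 ∧ mij T 4 4 = 0)) := by
  classical
  -- minimum degree is 1
  have hd1 : ∀ v : V, 1 ≤ T.degree v := by
    intro v
    obtain ⟨w, hw⟩ := Fintype.exists_ne_of_one_lt_card (by omega) v
    obtain ⟨p⟩ := hT.isConnected.preconnected v w
    cases p with
    | nil => exact absurd rfl hw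
    | cons h q => exact (T.degree_pos_iff_exists_adj v).mpr ⟨_, h⟩
  have hmaps := mapsS10 T hd1 hdeg
  -- edge count equation
  have hE : mij T 1 1 + mij T 1 2 + mij T 1 3 + mij T 1 4 + mij T 2 2 + mij T 2 3
      + mij T 2 4 + mij T 3 3 + mij T 3 4 + mij T 4 4 = n - 1 := by
    have h1 := Finset.card_eq_sum_card_fiberwise hmaps
    rw [sum_S10] at h1
    have h2 := hT.card_edgeFinset
    unfold mij
    omega
  -- incidence equations
  have hI : ∀ i : ℕ, ∑ t ∈ S10,
      (T.edgeFinset.filter (fun e => Sym2.map (fun v => T.degree v) e = t)).card • cnt i t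
        = i * nd T i := by
    intro i
    rw [← sum_fiber T hmaps (cnt i)]
    exact incid T i
  have hI1 : 2 * mij T 1 1 + mij T 1 2 + mij T 1 3 + mij T 1 4 = nd T 1 := by
    have h1 := hI 1
    rw [sum_S10] at h1
    simp only [cnt, Sym2.lift_mk, smul_eq_mul, reduceIte, Nat.reduceEqDiff] at h1
    unfold mij
    omega
  have hI2 : mij T 1 2 + 2 * mij T 2 2 + mij T 2 3 + mij T 2 4 = 2 * nd T 2 := by
    have h1 := hI 2
    rw [sum_S10] at h1
    simp only [cnt, Sym2.lift_mk, smul_eq_mul, reduceIte, Nat.reduceEqDiff] at h1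
    unfold mij
    omega
  have hI3 : mij T 1 3 + mij T 2 3 + 2 * mij T 3 3 + mij T 3 4 = 3 * nd T 3 := by
    have h1 := hI 3
    rw [sum_S10] at h1
    simp only [cnt, Sym2.lift_mk, smul_eq_mul, reduceIte, Nat.reduceEqDiff] at h1
    unfold mij
    omega
  have hI4 : mij T 1 4 + mij T 2 4 + mij T 3 4 + 2 * mij T 4 4 = 4 * nd T 4 := by
    have h1 := hI 4
    rw [sum_S10] at h1
    simp only [cnt, Sym2.lift_mk, smul_eq_mul, reduceIte, Nat.reduceEqDiff] at h1
    unfold mij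
    omega
  -- vertex count equation
  have hN : n = nd T 1 + nd T 2 + nd T 3 + nd T 4 := by
    have hm : ∀ v : V, v ∈ Finset.univ → T.degree v ∈ ({1,2,3,4} : Finset ℕ) := by
      intro v _
      have := hd1 v; have := hdeg v
      simp only [Finset.mem_insert, Finset.mem_singleton]
      omega
    have h1 := Finset.card_eq_sum_card_fiberwise hm
    rw [show ({1,2,3,4} : Finset ℕ) = insert 1 (insert 2 (insert 3 {4})) from rfl,
      Finset.sum_insert (by decide), Finset.sum_insert (by decide),
      Finset.sum_insert (by decide), Finset.sum_singleton] at h1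
    rw [hn, ← Finset.card_univ, h1]
    unfold nd
    omega
  -- SO2 formula
  have hSO : SO2 T = (3/5 : ℝ) * mij T 1 2 + (4/5) * mij T 1 3 + (15/17) * mij T 1 4
      + (5/13) * mij T 2 3 + (3/5) * mij T 2 4 + (7/25) * mij T 3 4 := by
    have h1 : SO2 T = ∑ e ∈ T.edgeFinset, wgt (Sym2.map (fun v => T.degree v) e) := by
      refine Finset.sum_congr rfl fun e _ => ?_
      induction e using Sym2.ind with
      | _ u v => simp [wgt, Sym2.map_pair_eq, Sym2.lift_mk]
    rw [h1, sum_fiber T hmaps wgt, sum_S10]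
    have w11 : wgt s(1,1) = 0 := by rw [wgt, Sym2.lift_mk]; norm_num
    have w12 : wgt s(1,2) = 3/5 := by rw [wgt, Sym2.lift_mk]; norm_num
    have w13 : wgt s(1,3) = 4/5 := by rw [wgt, Sym2.lift_mk]; norm_num
    have w14 : wgt s(1,4) = 15/17 := by rw [wgt, Sym2.lift_mk]; norm_num
    have w22 : wgt s(2,2) = 0 := by rw [wgt, Sym2.lift_mk]; norm_num
    have w23 : wgt s(2,3) = 5/13 := by rw [wgt, Sym2.lift_mk]; norm_num
    have w24 : wgt s(2,4) = 3/5 := by rw [wgt, Sym2.lift_mk]; norm_num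
    have w33 : wgt s(3,3) = 0 := by rw [wgt, Sym2.lift_mk]; norm_num
    have w34 : wgt s(3,4) = 7/25 := by rw [wgt, Sym2.lift_mk]; norm_num
    have w44 : wgt s(4,4) = 0 := by rw [wgt, Sym2.lift_mk]; norm_num
    rw [w11, w12, w13, w14, w22, w23, w24, w33, w34, w44]
    simp only [nsmul_eq_mul, mul_zero]
    unfold mij
    ring
  -- real versions of the equations
  have e1 : (mij T 1 1 : ℝ) + mij T 1 2 + mij T 1 3 + mij T 1 4 + mij T 2 2 + mij T 2 3
      + mij T 2 4 + mij T 3 3 + mij T 3 4 + mij T 4 4 = (n : ℝ) - 1 := by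
    have h1 := congrArg (Nat.cast : ℕ → ℝ) hE
    rw [Nat.cast_sub (show 1 ≤ n by omega)] at h1
    push_cast at h1
    linarith
  have e2 : 2 * (mij T 1 1 : ℝ) + mij T 1 2 + mij T 1 3 + mij T 1 4 = (nd T 1 : ℝ) := by
    exact_mod_cast hI1
  have e3 : (mij T 1 2 : ℝ) + 2 * mij T 2 2 + mij T 2 3 + mij T 2 4 = 2 * (nd T 2 : ℝ) := by
    exact_mod_cast hI2
  have e4 : (mij T 1 3 : ℝ) + mij T 2 3 + 2 * mij T 3 3 + mij T 3 4 = 3 * (nd T 3 : ℝ) := by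
    exact_mod_cast hI3
  have e5 : (mij T 1 4 : ℝ) + mij T 2 4 + mij T 3 4 + 2 * mij T 4 4 = 4 * (nd T 4 : ℝ) := by
    exact_mod_cast hI4
  have e6 : (n : ℝ) = (nd T 1 : ℝ) + nd T 2 + nd T 3 + nd T 4 := by exact_mod_cast hN
  have nn : ∀ i j : ℕ, (0:ℝ) ≤ (mij T i j : ℝ) := fun i j => Nat.cast_nonneg _
  -- cast facts for the two natural-number divisions
  have c14 : (((n + 3) / 2 : ℕ) : ℝ) = ((n : ℝ) + 3) / 2 := by
    have h2 : 2 * ((n + 3) / 2) = n + 3 := by omega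
    have h3 := congrArg (Nat.cast : ℕ → ℝ) h2
    push_cast at h3
    linarith
  have c24 : (((n - 5) / 2 : ℕ) : ℝ) = ((n : ℝ) - 5) / 2 := by
    have h2 : 2 * ((n - 5) / 2) = n - 5 := by omega
    have h3 := congrArg (Nat.cast : ℕ → ℝ) h2
    rw [Nat.cast_sub h5] at h3
    push_cast at h3
    linarith
  -- the key linear identity: the gap is a positive combination of the "bad" edge counts
  have slack : 7215 * (mij T 1 1 : ℝ) + 2340 * mij T 1 2 + 715 * mij T 1 3 + 4095 * mij T 2 2
      + 1450 * mij T 2 3 + 3055 * mij T 3 3 + 1248 * mij T 3 4 + 2535 * mij T 4 4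
      = 5525 * ((126 * (n : ℝ) - 30) / 170 - SO2 T) := by
    rw [hSO]
    linarith
  -- the upper bound
  have hub : SO2 T ≤ (126 * (n : ℝ) - 30) / 170 := by
    nlinarith [slack, nn 1 1, nn 1 2, nn 1 3, nn 2 2, nn 2 3, nn 3 3, nn 3 4, nn 4 4]
  refine ⟨hub, ?_, ?_⟩
  · intro heq
    have slack0 : 7215 * (mij T 1 1 : ℝ) + 2340 * mij T 1 2 + 715 * mij T 1 3 + 4095 * mij T 2 2 + 1450 * mij T 2 3 + 3055 * mij T 3 3 + 1248 * mij T 3 4 + 2535 * mij T 4 4 = 0 := by rw [heq] at slack; linarith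
    have z11 : (mij T 1 1 : ℝ) = 0 := le_antisymm (by linarith [slack0, nn 1 1, nn 1 2, nn 1 3, nn 2 2, nn 2 3, nn 3 3, nn 3 4, nn 4 4]) (nn 1 1)
    have z12 : (mij T 1 2 : ℝ) = 0 := le_antisymm (by linarith [slack0, nn 1 1, nn 1 2, nn 1 3, nn 2 2, nn 2 3, nn 3 3, nn 3 4, nn 4 4]) (nn 1 2)
    have z13 : (mij T 1 3 : ℝ) = 0 := le_antisymm (by linarith [slack0, nn 1 1, nn 1 2, nn 1 3, nn 2 2, nn 2 3, nn 3 3, nn 3 4, nn 4 4]) (nn 1 3)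
    have z22 : (mij T 2 2 : ℝ) = 0 := le_antisymm (by linarith [slack0, nn 1 1, nn 1 2, nn 1 3, nn 2 2, nn 2 3, nn 3 3, nn 3 4, nn 4 4]) (nn 2 2)
    have z23 : (mij T 2 3 : ℝ) = 0 := le_antisymm (by linarith [slack0, nn 1 1, nn 1 2, nn 1 3, nn 2 2, nn 2 3, nn 3 3, nn 3 4, nn 4 4]) (nn 2 3)
    have z33 : (mij T 3 3 : ℝ) = 0 := le_antisymm (by linarith [slack0, nn 1 1, nn 1 2, nn 1 3, nn 2 2, nn 2 3, nn 3 3, nn 3 4, nn 4 4]) (nn 3 3)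
    have z34 : (mij T 3 4 : ℝ) = 0 := le_antisymm (by linarith [slack0, nn 1 1, nn 1 2, nn 1 3, nn 2 2, nn 2 3, nn 3 3, nn 3 4, nn 4 4]) (nn 3 4)
    have z44 : (mij T 4 4 : ℝ) = 0 := le_antisymm (by linarith [slack0, nn 1 1, nn 1 2, nn 1 3, nn 2 2, nn 2 3, nn 3 3, nn 3 4, nn 4 4]) (nn 4 4)
    have h14R : (mij T 1 4 : ℝ) = ((n : ℝ) + 3) / 2 := by linarith
    have h24R : (mij T 2 4 : ℝ) = ((n : ℝ) - 5) / 2 := by linarith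
    refine ⟨?_, ?_, ?_, ?_, ?_, ?_, ?_, ?_, ?_⟩
    · exact_mod_cast h14R.trans c14.symm
    · exact_mod_cast h24R.trans c24.symm
    · exact_mod_cast z12
    · exact_mod_cast z13
    · exact_mod_cast z22
    · exact_mod_cast z23
    · exact_mod_cast z33
    · exact_mod_cast z34
    · exact_mod_cast z44
  · rintro ⟨h14, h24, h12, h13, h22, h23, h33, h34, h44⟩
    have h14R : (mij T 1 4 : ℝ) = ((n : ℝ) + 3) / 2 := by rw [h14]; exact c14
    have h24R : (mij T 2 4 : ℝ) = ((n : ℝ) - 5) / 2 := by rw [h24]; exact c24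
    have z12 : (mij T 1 2 : ℝ) = 0 := by rw [h12]; exact Nat.cast_zero
    have z13 : (mij T 1 3 : ℝ) = 0 := by rw [h13]; exact Nat.cast_zero
    have z23 : (mij T 2 3 : ℝ) = 0 := by rw [h23]; exact Nat.cast_zero
    have z34 : (mij T 3 4 : ℝ) = 0 := by rw [h34]; exact Nat.cast_zero
    rw [hSO, z12, z13, z23, z34, h14R, h24R]
    ring
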